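/- Let P = ({E_k : k ∈ K}, {M_0, M_1}) be a concurrent quantum program on ℂ^d, let F = ∑_{k∈K} F_k, and let ρ be a positive semidefinite d×d matrix. Then for every finite string f ∈ K*, supp(F_f(ρ)) ⊆ supp(∑_{i=0}^{d−1} F^i(ρ)). -/

import Mathlib

open Matrix
open scoped ComplexOrder

/-- The support of a matrix `ρ`, i.e. the range (column space) of `ρ`. -/
noncomputable def matSupp {d : ℕ} (ρ : Matrix (Fin d) (Fin d) ℂ) :
    Submodule ℂ (Fin d → ℂ) :=
  LinearMap.range ρ.mulVecLin

/-- The super-operator `F_k(ρ) = E_k(M₁ ρ M₁ᴴ)` of process `k`, where the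
super-operator `E_k` has Kraus operators `E k i`. -/
noncomputable def progF {d m n : ℕ} (E : Fin m → Fin n → Matrix (Fin d) (Fin d) ℂ)
    (M₁ : Matrix (Fin d) (Fin d) ℂ) (k : Fin m)
    (ρ : Matrix (Fin d) (Fin d) ℂ) : Matrix (Fin d) (Fin d) ℂ :=
  ∑ i, E k i * (M₁ * ρ * M₁ᴴ) * (E k i)ᴴ

/-- For a finite string `f = s₁s₂⋯sₙ`, the super-operator
`F_f = F_{sₙ} ∘ ⋯ ∘ F_{s₂} ∘ F_{s₁}` (the identity for the empty string). -/
noncomputable def progFStr {d m n : ℕ} (E : Fin m → Fin n → Matrix (Fin d) (Fin d) ℂ)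
    (M₁ : Matrix (Fin d) (Fin d) ℂ) :
    List (Fin m) → Matrix (Fin d) (Fin d) ℂ → Matrix (Fin d) (Fin d) ℂ
  | [], ρ => ρ
  | k :: f, ρ => progFStr E M₁ f (progF E M₁ k ρ)

variable {d : ℕ}

lemma star_dot_mulVec (M : Matrix (Fin d) (Fin d) ℂ) (v z : Fin d → ℂ) :
    star v ⬝ᵥ (M *ᵥ z) = star (Mᴴ *ᵥ v) ⬝ᵥ z := by
  rw [dotProduct_mulVec, star_mulVec, conjTranspose_conjTranspose]

lemma range_sup_ker_eq_top {C : Matrix (Fin d) (Fin d) ℂ} (hC : C.IsHermitian) :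
    LinearMap.range C.mulVecLin ⊔ LinearMap.ker C.mulVecLin = ⊤ := by
  have hdisj : Disjoint (LinearMap.range C.mulVecLin) (LinearMap.ker C.mulVecLin) := by
    rw [Submodule.disjoint_def]
    rintro x ⟨y, rfl⟩ hker
    simp only [LinearMap.mem_ker, mulVecLin_apply] at hker ⊢
    have h0 : star (C *ᵥ y) ⬝ᵥ (C *ᵥ y) = 0 := by
      rw [star_dot_mulVec, hC.eq, hker, star_zero, zero_dotProduct]
    exact dotProduct_star_self_eq_zero.mp h0
  apply Submodule.eq_top_of_finrank_eq
  have h1 := Submodule.finrank_sup_add_finrank_inf_eq (LinearMap.range C.mulVecLin)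
    (LinearMap.ker C.mulVecLin)
  rw [hdisj.eq_bot] at h1
  simp only [finrank_bot, add_zero] at h1
  rw [h1, LinearMap.finrank_range_add_finrank_ker]

lemma matSupp_le_of_ker_le {A C : Matrix (Fin d) (Fin d) ℂ}
    (hA : A.IsHermitian) (hC : C.IsHermitian)
    (h : LinearMap.ker C.mulVecLin ≤ LinearMap.ker A.mulVecLin) :
    matSupp A ≤ matSupp C := by
  rintro x ⟨z, rfl⟩
  simp only [mulVecLin_apply]
  have htop : (A *ᵥ z) ∈ LinearMap.range C.mulVecLin ⊔ LinearMap.ker C.mulVecLin := by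
    rw [range_sup_ker_eq_top hC]; trivial
  obtain ⟨u, hu, v, hv, huv⟩ := Submodule.mem_sup.mp htop
  have hvA : A *ᵥ v = 0 := h hv
  have hvC : C *ᵥ v = 0 := hv
  have hdot1 : star v ⬝ᵥ (A *ᵥ z) = 0 := by
    rw [star_dot_mulVec, hA.eq, hvA, star_zero, zero_dotProduct]
  have hdot2 : star v ⬝ᵥ u = 0 := by
    obtain ⟨w, rfl⟩ := hu
    rw [mulVecLin_apply, star_dot_mulVec, hC.eq, hvC, star_zero, zero_dotProduct]
  have hv0 : v = 0 := by
    have : star v ⬝ᵥ v = 0 := by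
      have := congrArg (fun y => star v ⬝ᵥ y) huv
      simpa only [dotProduct_add, hdot2, hdot1, zero_add] using this
    exact dotProduct_star_self_eq_zero.mp this
  rw [← huv, hv0, add_zero]
  exact hu

lemma matSupp_le_add_right {A B : Matrix (Fin d) (Fin d) ℂ}
    (hA : A.PosSemidef) (hB : B.PosSemidef) : matSupp A ≤ matSupp (A + B) := by
  apply matSupp_le_of_ker_le hA.1 (hA.add hB).1
  intro x hx
  simp only [LinearMap.mem_ker, mulVecLin_apply] at hx ⊢
  have h0 : star x ⬝ᵥ ((A + B) *ᵥ x) = 0 := by rw [hx, dotProduct_zero]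
  rw [add_mulVec, dotProduct_add] at h0
  have hA' := hA.dotProduct_mulVec_nonneg x
  have hB' := hB.dotProduct_mulVec_nonneg x
  have hAx : star x ⬝ᵥ (A *ᵥ x) = 0 := by
    by_contra hne
    have : 0 < star x ⬝ᵥ (A *ᵥ x) := lt_of_le_of_ne hA' (Ne.symm hne)
    have h2 : 0 < star x ⬝ᵥ (A *ᵥ x) + star x ⬝ᵥ (B *ᵥ x) := add_pos_of_pos_of_nonneg this hB'
    rw [h0] at h2
    exact lt_irrefl 0 h2
  exact (hA.dotProduct_mulVec_zero_iff x).mp hAx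

lemma matSupp_conjTranspose_mul_self (N : Matrix (Fin d) (Fin d) ℂ) :
    matSupp (Nᴴ * N) = LinearMap.range Nᴴ.mulVecLin := by
  have hle : matSupp (Nᴴ * N) ≤ LinearMap.range Nᴴ.mulVecLin := by
    rw [matSupp, mulVecLin_mul]
    exact LinearMap.range_comp_le_range _ _
  refine Submodule.eq_of_le_of_finrank_le hle ?_
  show Nᴴ.rank ≤ (Nᴴ * N).rank
  rw [Matrix.rank_conjTranspose_mul_self N, Matrix.rank_conjTranspose N]

lemma matSupp_conj {A : Matrix (Fin d) (Fin d) ℂ} (hA : A.PosSemidef)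
    (M : Matrix (Fin d) (Fin d) ℂ) :
    matSupp (M * A * Mᴴ) = Submodule.map M.mulVecLin (matSupp A) := by
  obtain ⟨B, rfl⟩ : ∃ B : Matrix (Fin d) (Fin d) ℂ, A = Bᴴ * B := by
    open scoped MatrixOrder in exact CStarAlgebra.nonneg_iff_eq_star_mul_self.mp hA.nonneg
  have key : M * (Bᴴ * B) * Mᴴ = (B * Mᴴ)ᴴ * (B * Mᴴ) := by
    rw [conjTranspose_mul, conjTranspose_conjTranspose]
    simp only [Matrix.mul_assoc]
  rw [key, matSupp_conjTranspose_mul_self, matSupp_conjTranspose_mul_self,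
    conjTranspose_mul, conjTranspose_conjTranspose, mulVecLin_mul,
    LinearMap.range_comp]

lemma matSupp_add_le (A B : Matrix (Fin d) (Fin d) ℂ) :
    matSupp (A + B) ≤ matSupp A ⊔ matSupp B := by
  rintro x ⟨z, rfl⟩
  simp only [mulVecLin_apply, add_mulVec]
  exact Submodule.add_mem_sup ⟨z, rfl⟩ ⟨z, rfl⟩

lemma posSemidef_sum {ι : Type*} (s : Finset ι) (f : ι → Matrix (Fin d) (Fin d) ℂ)
    (h : ∀ i ∈ s, (f i).PosSemidef) : (∑ i ∈ s, f i).PosSemidef := by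
  classical
  induction s using Finset.induction_on with
  | empty => simpa using Matrix.PosSemidef.zero
  | insert _ _ hni ih =>
    rw [Finset.sum_insert hni]
    exact (h _ (Finset.mem_insert_self _ _)).add
      (ih fun i hi => h i (Finset.mem_insert_of_mem hi))

lemma matSupp_term_le {ι : Type*} (s : Finset ι) (f : ι → Matrix (Fin d) (Fin d) ℂ)
    (h : ∀ i ∈ s, (f i).PosSemidef) {k : ι} (hk : k ∈ s) :
    matSupp (f k) ≤ matSupp (∑ i ∈ s, f i) := by
  classical
  rw [← Finset.add_sum_erase s f hk]
  exact matSupp_le_add_right (h k hk)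
    (posSemidef_sum _ _ fun i hi => h i (Finset.mem_of_mem_erase hi))

lemma matSupp_sum_le {ι : Type*} (s : Finset ι) (f : ι → Matrix (Fin d) (Fin d) ℂ) :
    matSupp (∑ i ∈ s, f i) ≤ ⨆ i ∈ s, matSupp (f i) := by
  rintro x ⟨z, rfl⟩
  have hsum : (∑ i ∈ s, f i) *ᵥ z = ∑ i ∈ s, f i *ᵥ z := by
    classical
    induction s using Finset.induction_on with
    | empty => simp
    | insert _ _ hni ih => rw [Finset.sum_insert hni, Finset.sum_insert hni, add_mulVec, ih]
  rw [mulVecLin_apply, hsum]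
  apply Submodule.sum_mem
  intro i hi
  refine Submodule.mem_iSup_of_mem i (Submodule.mem_iSup_of_mem hi ?_)
  exact ⟨z, rfl⟩

noncomputable def myF {d m n : ℕ} (E : Fin m → Fin n → Matrix (Fin d) (Fin d) ℂ)
    (M₁ : Matrix (Fin d) (Fin d) ℂ) (ρ : Matrix (Fin d) (Fin d) ℂ) :
    Matrix (Fin d) (Fin d) ℂ :=
  ∑ k, progF E M₁ k ρ

section Prog

variable {m n : ℕ} (E : Fin m → Fin n → Matrix (Fin d) (Fin d) ℂ)
    (M₁ : Matrix (Fin d) (Fin d) ℂ)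

lemma progF_term_eq (k : Fin m) (i : Fin n) (ρ : Matrix (Fin d) (Fin d) ℂ) :
    E k i * (M₁ * ρ * M₁ᴴ) * (E k i)ᴴ = (E k i * M₁) * ρ * (E k i * M₁)ᴴ := by
  rw [conjTranspose_mul]
  simp only [Matrix.mul_assoc]

lemma posSemidef_progF {ρ : Matrix (Fin d) (Fin d) ℂ} (hρ : ρ.PosSemidef) (k : Fin m) :
    (progF E M₁ k ρ).PosSemidef := by
  refine posSemidef_sum _ _ fun i _ => ?_
  rw [progF_term_eq]
  exact hρ.mul_mul_conjTranspose_same _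

lemma posSemidef_myF {ρ : Matrix (Fin d) (Fin d) ℂ} (hρ : ρ.PosSemidef) :
    (myF E M₁ ρ).PosSemidef :=
  posSemidef_sum _ _ fun k _ => posSemidef_progF E M₁ hρ k

lemma matSupp_progF_mono {σ τ : Matrix (Fin d) (Fin d) ℂ} (hσ : σ.PosSemidef)
    (hτ : τ.PosSemidef) (h : matSupp σ ≤ matSupp τ) (k : Fin m) :
    matSupp (progF E M₁ k σ) ≤ matSupp (progF E M₁ k τ) := by
  unfold progF
  refine le_trans (matSupp_sum_le Finset.univ
    (fun i => E k i * (M₁ * σ * M₁ᴴ) * (E k i)ᴴ)) ?_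
  refine iSup_le fun i => iSup_le fun _ => ?_
  have h1 : matSupp (E k i * (M₁ * σ * M₁ᴴ) * (E k i)ᴴ)
      ≤ matSupp (E k i * (M₁ * τ * M₁ᴴ) * (E k i)ᴴ) := by
    rw [progF_term_eq, progF_term_eq, matSupp_conj hσ, matSupp_conj hτ]
    exact Submodule.map_mono h
  refine le_trans h1 ?_
  exact matSupp_term_le Finset.univ (fun i => E k i * (M₁ * τ * M₁ᴴ) * (E k i)ᴴ)
    (fun i _ => by
      show (E k i * (M₁ * τ * M₁ᴴ) * (E k i)ᴴ).PosSemidef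
      rw [progF_term_eq]; exact hτ.mul_mul_conjTranspose_same _)
    (Finset.mem_univ i)

lemma matSupp_progF_le_myF {ρ : Matrix (Fin d) (Fin d) ℂ} (hρ : ρ.PosSemidef) (k : Fin m) :
    matSupp (progF E M₁ k ρ) ≤ matSupp (myF E M₁ ρ) :=
  matSupp_term_le Finset.univ _ (fun k' _ => posSemidef_progF E M₁ hρ k')
    (Finset.mem_univ k)

lemma matSupp_myF_mono {σ τ : Matrix (Fin d) (Fin d) ℂ} (hσ : σ.PosSemidef)
    (hτ : τ.PosSemidef) (h : matSupp σ ≤ matSupp τ) :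
    matSupp (myF E M₁ σ) ≤ matSupp (myF E M₁ τ) := by
  refine le_trans (le_of_eq (congrArg _ (myF.eq_def E M₁ σ))) ?_
  refine le_trans (matSupp_sum_le Finset.univ (fun k => progF E M₁ k σ)) ?_
  refine iSup_le fun k => iSup_le fun _ => ?_
  exact le_trans (matSupp_progF_mono E M₁ hσ hτ h k) (matSupp_progF_le_myF E M₁ hτ k)

lemma posSemidef_myF_iter {ρ : Matrix (Fin d) (Fin d) ℂ} (hρ : ρ.PosSemidef) (j : ℕ) :
    ((myF E M₁)^[j] ρ).PosSemidef := by
  induction j generalizing ρ with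
  | zero => exact hρ
  | succ j ih => rw [Function.iterate_succ_apply]; exact ih (posSemidef_myF E M₁ hρ)

lemma matSupp_myF_iter_mono {σ τ : Matrix (Fin d) (Fin d) ℂ} (hσ : σ.PosSemidef)
    (hτ : τ.PosSemidef) (h : matSupp σ ≤ matSupp τ) (j : ℕ) :
    matSupp ((myF E M₁)^[j] σ) ≤ matSupp ((myF E M₁)^[j] τ) := by
  induction j generalizing σ τ with
  | zero => exact h
  | succ j ih =>
    rw [Function.iterate_succ_apply, Function.iterate_succ_apply]
    exact ih (posSemidef_myF E M₁ hσ) (posSemidef_myF E M₁ hτ)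
      (matSupp_myF_mono E M₁ hσ hτ h)

lemma progF_add (k : Fin m) (X Y : Matrix (Fin d) (Fin d) ℂ) :
    progF E M₁ k (X + Y) = progF E M₁ k X + progF E M₁ k Y := by
  simp only [progF, Matrix.mul_add, Matrix.add_mul, Finset.sum_add_distrib]

lemma myF_add (X Y : Matrix (Fin d) (Fin d) ℂ) :
    myF E M₁ (X + Y) = myF E M₁ X + myF E M₁ Y := by
  simp only [myF, progF_add, Finset.sum_add_distrib]

lemma myF_sum {ι : Type*} (s : Finset ι) (f : ι → Matrix (Fin d) (Fin d) ℂ) :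
    myF E M₁ (∑ i ∈ s, f i) = ∑ i ∈ s, myF E M₁ (f i) := by
  classical
  induction s using Finset.induction_on with
  | empty => simp [myF, progF]
  | insert _ _ hni ih =>
    rw [Finset.sum_insert hni, Finset.sum_insert hni, myF_add, ih]

end Prog

section Main

variable {m n : ℕ} (E : Fin m → Fin n → Matrix (Fin d) (Fin d) ℂ)
    (M₁ : Matrix (Fin d) (Fin d) ℂ)

lemma progF_zero (k : Fin m) : progF E M₁ k 0 = 0 := by
  simp [progF]

lemma progFStr_zero (f : List (Fin m)) : progFStr E M₁ f 0 = 0 := by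
  induction f with
  | nil => rfl
  | cons k f ih => rw [progFStr, progF_zero, ih]

lemma matSupp_zero : matSupp (0 : Matrix (Fin d) (Fin d) ℂ) = ⊥ := by
  rw [matSupp, mulVecLin_zero, LinearMap.range_zero]

/-- Step A : the support of `F_f ρ` is contained in that of `F^{|f|} ρ`. -/
lemma matSupp_progFStr_le (f : List (Fin m)) :
    ∀ ρ : Matrix (Fin d) (Fin d) ℂ, ρ.PosSemidef →
      matSupp (progFStr E M₁ f ρ) ≤ matSupp ((myF E M₁)^[f.length] ρ) := by
  induction f with
  | nil => intro ρ _; exact le_rfl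
  | cons k f ih =>
    intro ρ hρ
    rw [progFStr, List.length_cons, Function.iterate_succ_apply]
    refine le_trans (ih _ (posSemidef_progF E M₁ hρ k)) ?_
    exact matSupp_myF_iter_mono E M₁ (posSemidef_progF E M₁ hρ k)
      (posSemidef_myF E M₁ hρ) (matSupp_progF_le_myF E M₁ hρ k) f.length

variable (ρ : Matrix (Fin d) (Fin d) ℂ)

/-- The partial sums `σ_j = ∑_{i ≤ j} F^i ρ`. -/
noncomputable def sigmaS (j : ℕ) : Matrix (Fin d) (Fin d) ℂ :=
  ∑ i ∈ Finset.range (j + 1), (myF E M₁)^[i] ρ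

variable {ρ}

lemma posSemidef_sigmaS (hρ : ρ.PosSemidef) (j : ℕ) : (sigmaS E M₁ ρ j).PosSemidef :=
  posSemidef_sum _ _ fun i _ => posSemidef_myF_iter E M₁ hρ i

lemma sigmaS_succ (j : ℕ) :
    sigmaS E M₁ ρ (j + 1) = ρ + myF E M₁ (sigmaS E M₁ ρ j) := by
  rw [sigmaS, sigmaS, Finset.sum_range_succ', myF_sum]
  simp only [Function.iterate_succ_apply', Function.iterate_zero_apply]
  rw [add_comm]

lemma matSupp_iter_le_sigmaS (hρ : ρ.PosSemidef) {i j : ℕ} (hij : i ≤ j) :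
    matSupp ((myF E M₁)^[i] ρ) ≤ matSupp (sigmaS E M₁ ρ j) :=
  matSupp_term_le (Finset.range (j + 1)) _
    (fun i _ => posSemidef_myF_iter E M₁ hρ i)
    (Finset.mem_range.mpr (Nat.lt_succ_of_le hij))

lemma sigmaS_zero : sigmaS E M₁ ρ 0 = ρ := by
  rw [sigmaS, Finset.range_one, Finset.sum_singleton, Function.iterate_zero_apply]

lemma matSupp_sigmaS_succ (hρ : ρ.PosSemidef) (b : ℕ) :
    matSupp (sigmaS E M₁ ρ b) ≤ matSupp (sigmaS E M₁ ρ (b + 1)) := by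
  have h1 : sigmaS E M₁ ρ (b + 1) = sigmaS E M₁ ρ b + (myF E M₁)^[b + 1] ρ := by
    rw [sigmaS, sigmaS, Finset.sum_range_succ]
  rw [h1]
  exact matSupp_le_add_right (posSemidef_sigmaS E M₁ hρ b)
    (posSemidef_myF_iter E M₁ hρ (b + 1))

lemma matSupp_sigmaS_mono (hρ : ρ.PosSemidef) {a b : ℕ} (hab : a ≤ b) :
    matSupp (sigmaS E M₁ ρ a) ≤ matSupp (sigmaS E M₁ ρ b) := by
  induction b, hab using Nat.le_induction with
  | base => exact le_rfl
  | succ b hab ih => exact le_trans ih (matSupp_sigmaS_succ E M₁ hρ b)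

lemma matSupp_le_add_left {A B : Matrix (Fin d) (Fin d) ℂ}
    (hA : A.PosSemidef) (hB : B.PosSemidef) : matSupp B ≤ matSupp (A + B) := by
  rw [add_comm]; exact matSupp_le_add_right hB hA

lemma matSupp_sigmaS_stab (hρ : ρ.PosSemidef) {j : ℕ}
    (hj : matSupp (sigmaS E M₁ ρ (j + 1)) ≤ matSupp (sigmaS E M₁ ρ j)) (t : ℕ) :
    matSupp (sigmaS E M₁ ρ (j + t)) ≤ matSupp (sigmaS E M₁ ρ j) := by
  induction t with
  | zero => exact le_rfl
  | succ t ih =>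
    rw [← Nat.add_assoc, sigmaS_succ]
    refine le_trans (matSupp_add_le _ _) (sup_le ?_ ?_)
    · refine le_trans (le_of_eq (congrArg matSupp (sigmaS_zero E M₁ (ρ := ρ)).symm)) ?_
      exact matSupp_sigmaS_mono E M₁ hρ (Nat.zero_le j)
    · have h1 : matSupp (myF E M₁ (sigmaS E M₁ ρ j)) ≤ matSupp (sigmaS E M₁ ρ (j + 1)) := by
        rw [sigmaS_succ]
        exact matSupp_le_add_left hρ (posSemidef_myF E M₁ (posSemidef_sigmaS E M₁ hρ j))
      refine le_trans (matSupp_myF_mono E M₁ (posSemidef_sigmaS E M₁ hρ _)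
        (posSemidef_sigmaS E M₁ hρ j) ih) (le_trans h1 hj)

lemma matSupp_ne_bot (hρ0 : ρ ≠ 0) : matSupp ρ ≠ ⊥ := by
  intro hb
  apply hρ0
  have h0 : ρ.mulVecLin = 0 := LinearMap.range_eq_bot.mp hb
  ext i j
  have := congrFun (congrArg DFunLike.coe h0) (Pi.single j 1)
  simp only [mulVecLin_apply, LinearMap.zero_apply] at this
  have h2 := congrFun this i
  rw [Matrix.mulVec_single] at h2
  simpa using h2

lemma one_le_finrank_matSupp (hρ0 : ρ ≠ 0) : 1 ≤ Module.finrank ℂ (matSupp ρ) := by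
  rw [Nat.one_le_iff_ne_zero]
  intro h
  exact matSupp_ne_bot (ρ := ρ) hρ0 (Submodule.finrank_eq_zero.mp h)

lemma finrank_matSupp_le (A : Matrix (Fin d) (Fin d) ℂ) :
    Module.finrank ℂ (matSupp A) ≤ d := by
  refine le_trans (Submodule.finrank_le _) ?_
  rw [Module.finrank_pi]
  simp

lemma exists_stab (hρ : ρ.PosSemidef) (hρ0 : ρ ≠ 0) :
    ∃ j, j < d ∧ matSupp (sigmaS E M₁ ρ (j + 1)) ≤ matSupp (sigmaS E M₁ ρ j) := by
  by_contra hc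
  push_neg at hc
  have key : ∀ j, j ≤ d → j + 1 ≤ Module.finrank ℂ (matSupp (sigmaS E M₁ ρ j)) := by
    intro j
    induction j with
    | zero =>
      intro _
      rw [sigmaS_zero E M₁ (ρ := ρ)]
      exact one_le_finrank_matSupp hρ0
    | succ j ih =>
      intro hjd
      have hj : j < d := Nat.lt_of_succ_le hjd
      have hlt : matSupp (sigmaS E M₁ ρ j) < matSupp (sigmaS E M₁ ρ (j + 1)) :=
        lt_of_le_of_ne (matSupp_sigmaS_succ E M₁ hρ j)
          (fun h => hc j hj (le_of_eq h.symm))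
      have := Submodule.finrank_lt_finrank_of_lt hlt
      have h2 := ih (Nat.le_of_lt hj)
      omega
  have h1 := key d le_rfl
  have h2 := finrank_matSupp_le (sigmaS E M₁ ρ d)
  omega

end Main

theorem supp_FStr_le_supp_sum_pow {d m n : ℕ}
    (E : Fin m → Fin n → Matrix (Fin d) (Fin d) ℂ)
    (M₀ M₁ : Matrix (Fin d) (Fin d) ℂ)
    (hE : ∀ k, ∑ i, (E k i)ᴴ * E k i = 1)
    (hM : M₀ᴴ * M₀ + M₁ᴴ * M₁ = 1)
    (ρ : Matrix (Fin d) (Fin d) ℂ) (hρ : ρ.PosSemidef) :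
    ∀ f : List (Fin m),
      matSupp (progFStr E M₁ f ρ)
        ≤ matSupp (∑ i ∈ Finset.range d, (fun τ => ∑ k, progF E M₁ k τ)^[i] ρ) := by
  intro f
  by_cases hρ0 : ρ = 0
  · subst hρ0
    rw [progFStr_zero, matSupp_zero]
    exact bot_le
  · have hd1 : 1 ≤ d :=
      le_trans (one_le_finrank_matSupp hρ0) (finrank_matSupp_le ρ)
    obtain ⟨j, hjd, hstab⟩ := exists_stab E M₁ hρ hρ0
    have target_eq : (∑ i ∈ Finset.range d, (fun τ => ∑ k, progF E M₁ k τ)^[i] ρ)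
        = sigmaS E M₁ ρ (d - 1) := by
      show (∑ i ∈ Finset.range d, (myF E M₁)^[i] ρ) = _
      rw [sigmaS, Nat.sub_add_cancel hd1]
    rw [target_eq]
    refine le_trans (matSupp_progFStr_le E M₁ f ρ hρ) ?_
    refine le_trans (matSupp_iter_le_sigmaS E M₁ hρ (le_refl f.length)) ?_
    refine le_trans (matSupp_sigmaS_mono E M₁ hρ (Nat.le_add_left f.length j)) ?_
    refine le_trans (matSupp_sigmaS_stab E M₁ hρ hstab f.length) ?_
    exact matSupp_sigmaS_mono E M₁ hρ (Nat.le_pred_of_lt hjd)
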